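/- arXiv:2102.12148 — 12 statements merged into one kernel-verified Lean document; each statement's English description precedes it below -/
import Mathlib

section
/- A 1-absorbing primary submodule is a 2-absorbing primary submodule. -/
open Submodule

section Defs

variable {R : Type*} [CommRing R]

/-- A prime submodule: proper, and `a • m ∈ N` implies `m ∈ N` or `a ∈ (N :_R M)`. -/
def IsPrimeSubmodule {M : Type*} [AddCommGroup M] [Module R M] (N : Submodule R M) : Prop :=
  N ≠ ⊤ ∧ ∀ (a : R) (m : M), a • m ∈ N → m ∈ N ∨ a ∈ N.colon ⊤

/-- The `M`-radical of `N`: intersection of all prime submodules containing `N`. -/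
def Mrad {M : Type*} [AddCommGroup M] [Module R M] (N : Submodule R M) : Submodule R M :=
  sInf {P | IsPrimeSubmodule P ∧ N ≤ P}

/-- A 1-absorbing primary submodule. -/
def Is1AbsPrimary {M : Type*} [AddCommGroup M] [Module R M] (N : Submodule R M) : Prop :=
  N ≠ ⊤ ∧ ∀ a b : R, ¬ IsUnit a → ¬ IsUnit b → ∀ m : M,
    (a * b) • m ∈ N → a * b ∈ N.colon ⊤ ∨ m ∈ Mrad N

/-- A 2-absorbing primary submodule. -/
def Is2AbsPrimary {M : Type*} [AddCommGroup M] [Module R M] (N : Submodule R M) : Prop :=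
  N ≠ ⊤ ∧ ∀ (a b : R) (m : M), (a * b) • m ∈ N →
    a * b ∈ N.colon ⊤ ∨ a • m ∈ Mrad N ∨ b • m ∈ Mrad N

/-- A 1-absorbing primary ideal. -/
def Is1AbsPrimaryIdeal {A : Type*} [CommRing A] (I : Ideal A) : Prop :=
  I ≠ ⊤ ∧ ∀ a b c : A, ¬ IsUnit a → ¬ IsUnit b → ¬ IsUnit c →
    a * b * c ∈ I → a * b ∈ I ∨ c ∈ I.radical

/-- A multiplication module: every submodule `N` satisfies `N = (N :_R M) M`. -/
def IsMultiplicationModule (R M : Type*) [CommRing R] [AddCommGroup M] [Module R M] : Prop :=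
  ∀ N : Submodule R M, N = (N.colon ⊤) • (⊤ : Submodule R M)

end Defs

theorem one_abs_primary_is_two_abs_primary {R M : Type*} [CommRing R] [AddCommGroup M]
    [Module R M] (N : Submodule R M) (hN : Is1AbsPrimary N) :
    Is2AbsPrimary N := by
  obtain ⟨hNtop, h1⟩ := hN
  have hle : N ≤ Mrad N := le_sInf fun P hP => hP.2
  refine ⟨hNtop, fun a b m habm => ?_⟩
  by_cases ha : IsUnit a
  · right; right
    obtain ⟨u, rfl⟩ := ha
    have hbm : b • m = (u⁻¹ : Rˣ) • ((↑u * b) • m) := by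
      rw [Units.smul_def, smul_smul, ← mul_assoc, Units.inv_mul, one_mul]
    exact hle (hbm ▸ N.smul_mem _ habm)
  · by_cases hb : IsUnit b
    · right; left
      obtain ⟨u, rfl⟩ := hb
      have ham : a • m = (u⁻¹ : Rˣ) • ((a * ↑u) • m) := by
        rw [Units.smul_def, smul_smul, mul_comm a, ← mul_assoc, Units.inv_mul, one_mul]
      exact hle (ham ▸ N.smul_mem _ habm)
    · rcases h1 a b ha hb m habm with h | h
      · exact Or.inl h
      · right; left
        exact Submodule.smul_mem _ a h
end

section
/- A proper submodule N of an R-module M is 1-absorbing primary if and only if for all non-unit elements a, b ∈ R and every submodule K of M with abK ⊆ N, either ab ∈ (N :_R M) or K ⊆ M-rad(N). -/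
open Submodule

theorem one_abs_primary_iff_submodule_condition {R M : Type*} [CommRing R] [AddCommGroup M]
    [Module R M] (N : Submodule R M) (hN : N ≠ ⊤) :
    Is1AbsPrimary N ↔
      ∀ a b : R, ¬ IsUnit a → ¬ IsUnit b → ∀ K : Submodule R M,
        (∀ k ∈ K, (a * b) • k ∈ N) → a * b ∈ N.colon ⊤ ∨ K ≤ Mrad N := by
  constructor
  · rintro ⟨-, h⟩ a b ha hb K hK
    by_cases hab : a * b ∈ N.colon ⊤
    · exact Or.inl hab
    · exact Or.inr fun k hk => (h a b ha hb k (hK k hk)).resolve_left hab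
  · intro h
    refine ⟨hN, fun a b ha hb m hm => ?_⟩
    have hK : ∀ k ∈ Submodule.span R ({m} : Set M), (a * b) • k ∈ N := by
      intro k hk
      rcases Submodule.mem_span_singleton.mp hk with ⟨r, rfl⟩
      rw [smul_comm]
      exact N.smul_mem r hm
    rcases h a b ha hb (Submodule.span R {m}) hK with h1 | h1
    · exact Or.inl h1
    · exact Or.inr (h1 (Submodule.mem_span_singleton_self m))
end

section
/- A proper submodule N of an R-module M is 1-absorbing primary if and only if whenever I₁I₂K ⊆ N for proper ideals I₁, I₂ of R and a submodule K of M, either I₁I₂ ⊆ (N :_R M) or K ⊆ M-rad(N). -/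
open Submodule

theorem one_abs_primary_iff_ideal_condition {R M : Type*} [CommRing R] [AddCommGroup M]
    [Module R M] (N : Submodule R M) (hN : N ≠ ⊤) :
    Is1AbsPrimary N ↔
      ∀ I₁ I₂ : Ideal R, I₁ ≠ ⊤ → I₂ ≠ ⊤ → ∀ K : Submodule R M,
        (I₁ * I₂) • K ≤ N → I₁ * I₂ ≤ N.colon ⊤ ∨ K ≤ Mrad N := by
  constructor
  · rintro ⟨-, h⟩ I₁ I₂ hI₁ hI₂ K hK
    by_cases hKrad : K ≤ Mrad N
    · exact Or.inr hKrad
    · left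
      obtain ⟨m, hmK, hmrad⟩ := Set.not_subset.mp hKrad
      rw [Ideal.mul_le]
      intro a ha b hb
      have hau : ¬ IsUnit a := fun hu => hI₁ (Ideal.eq_top_of_isUnit_mem _ ha hu)
      have hbu : ¬ IsUnit b := fun hu => hI₂ (Ideal.eq_top_of_isUnit_mem _ hb hu)
      have : (a * b) • m ∈ N := hK (Submodule.smul_mem_smul (Ideal.mul_mem_mul ha hb) hmK)
      rcases h a b hau hbu m this with h' | h'
      · exact h'
      · exact absurd h' hmrad
  · intro h
    refine ⟨hN, fun a b ha hb m hm => ?_⟩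
    have hI₁ : Ideal.span {a} ≠ ⊤ := fun ht => ha (Ideal.span_singleton_eq_top.mp ht)
    have hI₂ : Ideal.span {b} ≠ ⊤ := fun ht => hb (Ideal.span_singleton_eq_top.mp ht)
    have hle : (Ideal.span {a} * Ideal.span {b}) • (Submodule.span R {m} : Submodule R M) ≤ N := by
      rw [Ideal.span_singleton_mul_span_singleton]
      apply Submodule.smul_le.mpr
      intro r hr n hn
      obtain ⟨c, rfl⟩ := Ideal.mem_span_singleton'.mp hr
      obtain ⟨d, rfl⟩ := Submodule.mem_span_singleton.mp hn
      have : (c * (a * b)) • d • m = (c * d) • ((a * b) • m) := by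
        rw [smul_smul, smul_smul]; ring_nf
      rw [this]
      exact N.smul_mem _ hm
    rcases h _ _ hI₁ hI₂ _ hle with h' | h'
    · left
      rw [Ideal.span_singleton_mul_span_singleton] at h'
      exact h' (Ideal.mem_span_singleton_self _)
    · exact Or.inr (h' (Submodule.mem_span_singleton_self _))
end

section
/- Let M be a finitely generated faithful multiplication R-module and I an ideal of R. Then I is a 1-absorbing primary ideal of R if and only if IM is a 1-absorbing primary submodule of M. -/
open Submodule

section Aux

variable {R M : Type*} [CommRing R] [AddCommGroup M] [Module R M]

lemma faithful_zero (hfaith : (⊥ : Submodule R M).colon ⊤ = ⊥) {r : R}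
    (h : ∀ x : M, r • x = 0) : r = 0 := by
  have hr : r ∈ (⊥ : Submodule R M).colon ⊤ := by
    rw [Submodule.mem_colon]
    intro p _
    simpa using h p
  rw [hfaith] at hr
  simpa using hr

lemma one_mem_theta [Module.Finite R M] (hfaith : (⊥ : Submodule R M).colon ⊤ = ⊥)
    (hmul : IsMultiplicationModule R M) :
    (1 : R) ∈ ⨆ m : M, (Submodule.span R {m}).colon ⊤ := by
  set θ := ⨆ m : M, (Submodule.span R {m}).colon ⊤ with hθ
  have htop : (⊤ : Submodule R M) ≤ θ • (⊤ : Submodule R M) := by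
    intro x _
    have hx : x ∈ ((Submodule.span R {x}).colon ⊤) • (⊤ : Submodule R M) := by
      rw [← hmul]
      exact Submodule.mem_span_singleton_self x
    exact Submodule.smul_mono_left (le_iSup _ x) hx
  obtain ⟨r, hr1, hr0⟩ :=
    Submodule.exists_sub_one_mem_and_smul_eq_zero_of_fg_of_le_smul θ ⊤
      (Module.Finite.fg_top (R := R) (M := M)) htop
  have hr : r = 0 := faithful_zero hfaith fun x => hr0 x trivial
  rw [hr] at hr1
  simpa using θ.neg_mem hr1

lemma colon_smul_top [Module.Finite R M] (hfaith : (⊥ : Submodule R M).colon ⊤ = ⊥)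
    (hmul : IsMultiplicationModule R M) (I : Ideal R) :
    (I • (⊤ : Submodule R M)).colon ⊤ = I := by
  apply le_antisymm
  · intro a ha
    have haI : ∀ x : M, a • x ∈ I • (⊤ : Submodule R M) := fun x =>
      Submodule.mem_colon.mp ha x trivial
    set Q : Ideal R := I.colon (Ideal.span {a}) with hQdef
    have hsq : ∀ m : M, ∀ c ∈ (Submodule.span R {m}).colon (⊤ : Submodule R M),
        c ^ 2 * a ∈ I := by
      intro m c hc
      have hcx : ∀ x : M, c • x ∈ Submodule.span R {m} := fun x =>
        Submodule.mem_colon.mp hc x trivial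
      -- c • (a • m) ∈ I • span {m}
      have h1 : c • (a • m) ∈ I • Submodule.span R {m} := by
        refine Submodule.smul_induction_on (haI m) ?_ ?_
        · intro i hi x _
          rw [smul_comm]
          exact Submodule.smul_mem_smul hi (hcx x)
        · intro x y hx hy
          rw [smul_add]
          exact Submodule.add_mem _ hx hy
      obtain ⟨d, hdI, hdm⟩ := Submodule.mem_smul_span_singleton.mp h1
      have hkey : c ^ 2 * a = d * c := by
        have hzero : ∀ y : M, (c ^ 2 * a - d * c) • y = 0 := by
          intro y
          obtain ⟨r, hr⟩ := Submodule.mem_span_singleton.mp (hcx y)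
          have : (c ^ 2 * a) • y = (d * c) • y := by
            calc (c ^ 2 * a) • y = (c * a) • (c • y) := by
                  rw [← mul_smul]; ring_nf
              _ = (c * a) • (r • m) := by rw [← hr]
              _ = r • ((c * a) • m) := by rw [smul_comm]
              _ = r • (c • (a • m)) := by rw [mul_smul]
              _ = r • (d • m) := by rw [hdm]
              _ = d • (r • m) := by rw [smul_comm]
              _ = d • (c • y) := by rw [hr]
              _ = (d * c) • y := by rw [mul_smul]
          rw [sub_smul, this, sub_self]
        exact sub_eq_zero.mp (faithful_zero hfaith hzero)
      rw [hkey]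
      exact I.mul_mem_right c hdI
    have hθ : (⨆ m : M, (Submodule.span R {m}).colon (⊤ : Submodule R M)) ≤ Q.radical := by
      refine iSup_le fun m => fun c hc => ?_
      refine ⟨2, ?_⟩
      rw [hQdef, Submodule.mem_colon]
      intro p hp
      obtain ⟨s, hs⟩ := Ideal.mem_span_singleton'.mp hp
      rw [smul_eq_mul, ← hs]
      have : c ^ 2 * (s * a) = s * (c ^ 2 * a) := by ring
      rw [this]
      exact I.mul_mem_left s (hsq m c hc)
    have h1Q : (1 : R) ∈ Q.radical := hθ (one_mem_theta hfaith hmul)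
    have hQtop : Q = ⊤ := Ideal.radical_eq_top.mp (Ideal.eq_top_iff_one _ |>.mpr h1Q)
    have h1 : (1 : R) ∈ Q := hQtop ▸ trivial
    have := Submodule.mem_colon.mp h1 a (Ideal.mem_span_singleton_self a)
    simpa using this
  · intro r hr
    rw [Submodule.mem_colon]
    intro p _
    exact Submodule.smul_mem_smul hr trivial

end Aux

section Aux2

variable {R M : Type*} [CommRing R] [AddCommGroup M] [Module R M] [Module.Finite R M]

omit [Module.Finite R M] in
lemma colon_prime_of_prime {P : Submodule R M} (hP : IsPrimeSubmodule P) :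
    (P.colon ⊤).IsPrime := by
  constructor
  · intro h
    apply hP.1
    rw [eq_top_iff]
    intro x _
    have h1 : (1 : R) ∈ P.colon ⊤ := h ▸ trivial
    simpa using Submodule.mem_colon.mp h1 x trivial
  · intro a b hab
    by_cases ha : a ∈ P.colon ⊤
    · exact Or.inl ha
    · right
      obtain ⟨x, -, hx⟩ : ∃ x, x ∈ (⊤ : Submodule R M) ∧ a • x ∉ P := by
        by_contra h
        push_neg at h
        exact ha (Submodule.mem_colon.mpr fun p hp => h p hp)
      rw [Submodule.mem_colon] at hab
      have : b • (a • x) ∈ P := by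
        have := hab x trivial
        rwa [mul_comm, mul_smul] at this
      rcases hP.2 b (a • x) this with h | h
      · exact absurd h hx
      · exact h

lemma isPrimeSubmodule_smul_top (hfaith : (⊥ : Submodule R M).colon ⊤ = ⊥)
    (hmul : IsMultiplicationModule R M) {p : Ideal R} (hp : p.IsPrime) :
    IsPrimeSubmodule (p • (⊤ : Submodule R M)) := by
  have hcolon := colon_smul_top hfaith hmul p
  constructor
  · intro h
    apply hp.ne_top
    rw [← hcolon, h, eq_top_iff]
    intro r _
    rw [Submodule.mem_colon]
    intro q _
    trivial
  · intro a m ham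
    by_cases hap : a ∈ p
    · refine Or.inr ?_
      rw [hcolon]
      exact hap
    · left
      have hK : (Submodule.span R {m}).colon (⊤ : Submodule R M) ≤ p := by
        intro c hc
        have hac : a * c ∈ p := by
          rw [← hcolon, Submodule.mem_colon]
          intro x _
          obtain ⟨r, hr⟩ := Submodule.mem_span_singleton.mp
            (Submodule.mem_colon.mp hc x trivial)
          rw [mul_smul, ← hr, smul_comm]
          exact Submodule.smul_mem _ r ham
        rcases hp.mem_or_mem hac with h | h
        · exact absurd h hap
        · exact h
      have hm : m ∈ (Submodule.span R {m}).colon (⊤ : Submodule R M) • (⊤ : Submodule R M) := by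
        show m ∈ (Submodule.span R {m}).colon (⊤ : Set M) • (⊤ : Submodule R M)
        rw [← hmul]
        exact Submodule.mem_span_singleton_self m
      exact Submodule.smul_mono_left hK hm

omit [Module.Finite R M] in
lemma rad_smul_le_Mrad (I : Ideal R) :
    I.radical • (⊤ : Submodule R M) ≤ Mrad (I • (⊤ : Submodule R M)) := by
  refine le_sInf fun P hP => ?_
  obtain ⟨hPprime, hIP⟩ := hP
  have hcp := colon_prime_of_prime (M := M) hPprime
  have hIc : I ≤ P.colon ⊤ := by
    intro i hi
    rw [Submodule.mem_colon]
    intro x _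
    exact hIP (Submodule.smul_mem_smul hi trivial)
  have hrad : I.radical ≤ P.colon ⊤ := hcp.radical_le_iff.mpr hIc
  calc I.radical • (⊤ : Submodule R M) ≤ (P.colon ⊤) • ⊤ := Submodule.smul_mono_left hrad
    _ ≤ P := Submodule.smul_le.mpr fun r hr n _ => Submodule.mem_colon.mp hr n trivial

lemma Mrad_le_prime (hfaith : (⊥ : Submodule R M).colon ⊤ = ⊥)
    (hmul : IsMultiplicationModule R M) {I p : Ideal R} (hp : p.IsPrime) (hIp : I ≤ p) :
    Mrad (I • (⊤ : Submodule R M)) ≤ p • (⊤ : Submodule R M) :=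
  sInf_le ⟨isPrimeSubmodule_smul_top hfaith hmul hp, Submodule.smul_mono_left hIp⟩

end Aux2

theorem one_abs_primary_ideal_iff_smul_top {R M : Type*} [CommRing R] [AddCommGroup M]
    [Module R M] [Module.Finite R M] (hfaith : (⊥ : Submodule R M).colon ⊤ = ⊥)
    (hmul : IsMultiplicationModule R M) (I : Ideal R) :
    Is1AbsPrimaryIdeal I ↔ Is1AbsPrimary (I • (⊤ : Submodule R M)) := by
  have hcolon := colon_smul_top hfaith hmul I
  have hne : I ≠ ⊤ ↔ I • (⊤ : Submodule R M) ≠ ⊤ := by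
    constructor
    · intro hI h
      apply hI
      rw [← hcolon, h, eq_top_iff]
      intro r _
      rw [Submodule.mem_colon]
      intro q _
      trivial
    · intro h hI
      apply h
      rw [hI, Submodule.top_smul]
  constructor
  · rintro ⟨hIne, hI⟩
    refine ⟨hne.mp hIne, fun a b ha hb m habm => ?_⟩
    by_cases hab : a * b ∈ I
    · left
      rw [Submodule.mem_colon]
      intro x _
      exact Submodule.smul_mem_smul hab trivial
    · right
      -- show m ∈ radical I • ⊤ ≤ Mrad
      have hK : (Submodule.span R {m}).colon (⊤ : Submodule R M) ≤ I.radical := by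
        intro c hc
        have habc : a * b * c ∈ I := by
          rw [← hcolon, Submodule.mem_colon]
          intro x _
          obtain ⟨r, hr⟩ := Submodule.mem_span_singleton.mp
            (Submodule.mem_colon.mp hc x trivial)
          rw [mul_smul, ← hr, smul_comm]
          exact Submodule.smul_mem _ r habm
        by_cases hcu : IsUnit c
        · exfalso
          apply hab
          obtain ⟨u, hu⟩ := hcu
          have : a * b = a * b * c * ↑u⁻¹ := by
            rw [← hu, Units.mul_inv_cancel_right]
          rw [this]
          exact I.mul_mem_right _ habc
        · rcases hI a b c ha hb hcu habc with h | h
          · exact absurd h hab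
          · exact h
      have hm : m ∈ I.radical • (⊤ : Submodule R M) := by
        have : m ∈ (Submodule.span R {m}).colon (⊤ : Submodule R M) • (⊤ : Submodule R M) := by
          show m ∈ (Submodule.span R {m}).colon (⊤ : Set M) • (⊤ : Submodule R M)
          rw [← hmul]
          exact Submodule.mem_span_singleton_self m
        exact Submodule.smul_mono_left hK this
      exact rad_smul_le_Mrad I hm
  · rintro ⟨hNne, hN⟩
    refine ⟨hne.mpr hNne, fun a b c ha hb hc habc => ?_⟩
    by_cases hab : a * b ∈ I
    · exact Or.inl hab
    · right
      have hcm : ∀ m : M, c • m ∈ Mrad (I • (⊤ : Submodule R M)) := by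
        intro m
        have h1 : (a * b) • (c • m) ∈ I • (⊤ : Submodule R M) := by
          rw [← mul_smul]
          exact Submodule.smul_mem_smul habc trivial
        rcases hN a b ha hb (c • m) h1 with h | h
        · exact absurd (hcolon ▸ h) hab
        · exact h
      rw [Ideal.radical_eq_sInf]
      refine Submodule.mem_sInf.mpr fun p hp => ?_
      obtain ⟨hIp, hpprime⟩ := hp
      have hle := Mrad_le_prime hfaith hmul hpprime hIp (M := M)
      have : ∀ m : M, c • m ∈ p • (⊤ : Submodule R M) := fun m => hle (hcm m)
      have hc' : c ∈ (p • (⊤ : Submodule R M)).colon ⊤ :=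
        Submodule.mem_colon.mpr fun x _ => this x
      rw [colon_smul_top hfaith hmul p] at hc'
      exact hc'
end

section
/- If N is a 1-absorbing primary submodule of a finitely generated multiplication R-module M, then √(N :_R M) is a prime ideal of R. -/
open Submodule

section Aux

variable {R M : Type*} [CommRing R] [AddCommGroup M] [Module R M]

/-- Determinant trick: if `x • M ⊆ p M` for a prime `p` containing all of `ann M`,
then `x ∈ p` (for `M` finitely generated). -/
lemma aux_mem_of_smul_le [Module.Finite R M] (p : Ideal R) (hp : p.IsPrime)
    (hann : ∀ r : R, (∀ m : M, r • m = 0) → r ∈ p)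
    (x : R) (hx : ∀ m : M, x • m ∈ p • (⊤ : Submodule R M)) : x ∈ p := by
  obtain ⟨P, hmonic, -, hcoeff, heval⟩ :=
    LinearMap.exists_monic_and_coeff_mem_pow_and_aeval_eq_zero_of_range_le_smul R
      (algebraMap R (Module.End R M) x) p (by
        rintro y ⟨m, rfl⟩
        simpa [Module.algebraMap_end_apply] using hx m)
  -- `P.eval x` annihilates `M`
  have hP : P.eval x ∈ p := by
    apply hann
    intro m
    have : Polynomial.aeval (algebraMap R (Module.End R M) x) P =
        algebraMap R (Module.End R M) (P.eval x) := by
      rw [Polynomial.aeval_algebraMap_apply_eq_algebraMap_eval]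
    rw [heval] at this
    have := congrArg (fun f : Module.End R M => f m) this.symm
    simpa [Module.algebraMap_end_apply] using this
  set d := P.natDegree with hd
  have hxd : x ^ d ∈ p := by
    have hsum : P.eval x = ∑ k ∈ Finset.range (d + 1), P.coeff k * x ^ k := by
      rw [Polynomial.eval_eq_sum_range]
    have hlow : ∀ k ∈ Finset.range d, P.coeff k * x ^ k ∈ p := by
      intro k hk
      rw [Finset.mem_range] at hk
      have h1 : P.coeff k ∈ p ^ (d - k) := hcoeff k
      have h2 : p ^ (d - k) ≤ p := Ideal.pow_le_self (by omega)
      exact p.mul_mem_right _ (h2 h1)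
    have hsum' : ∑ k ∈ Finset.range d, P.coeff k * x ^ k ∈ p := Ideal.sum_mem _ hlow
    have : P.eval x = (∑ k ∈ Finset.range d, P.coeff k * x ^ k) + x ^ d := by
      rw [hsum, Finset.sum_range_succ, hmonic.coeff_natDegree, one_mul]
    have : x ^ d = P.eval x - ∑ k ∈ Finset.range d, P.coeff k * x ^ k := by
      rw [this]; ring
    rw [this]
    exact p.sub_mem hP hsum'
  rcases Nat.eq_zero_or_pos d with h0 | h0
  · exfalso; exact hp.ne_top (Ideal.eq_top_of_isUnit_mem _ (by simpa [h0] using hxd) isUnit_one)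
  · exact hp.mem_of_pow_mem _ hxd

/-- In a finitely generated multiplication module, `p • ⊤` is a prime submodule for any
prime ideal `p` containing the annihilator. -/
lemma aux_smul_top_isPrime [Module.Finite R M] (hmul : IsMultiplicationModule R M)
    (p : Ideal R) (hp : p.IsPrime)
    (hann : ∀ r : R, (∀ m : M, r • m = 0) → r ∈ p) :
    IsPrimeSubmodule (p • (⊤ : Submodule R M)) := by
  constructor
  · intro htop
    have h1 : (1 : R) ∈ p := by
      apply aux_mem_of_smul_le p hp hann
      intro m
      rw [htop]; trivial
    exact hp.ne_top (Ideal.eq_top_of_isUnit_mem _ h1 isUnit_one)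
  · intro a m ham
    by_cases hm : m ∈ p • (⊤ : Submodule R M)
    · exact Or.inl hm
    right
    -- consider K = Rm + pM
    set K : Submodule R M := (span R {m}) ⊔ p • (⊤ : Submodule R M) with hK
    have hKm : m ∈ K := Submodule.mem_sup_left (mem_span_singleton_self m)
    -- (K : M) is not contained in p
    have hKc : ¬ (K.colon ⊤ ≤ p) := by
      intro hle
      apply hm
      have : K ≤ p • (⊤ : Submodule R M) := by
        calc K = (K.colon ⊤) • (⊤ : Submodule R M) := hmul K
        _ ≤ p • (⊤ : Submodule R M) := Submodule.smul_mono_left hle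
      exact this hKm
    obtain ⟨c, hcK, hcp⟩ := Set.not_subset.mp hKc
    -- a * c • m' ∈ pM for every m'
    have hac : a * c ∈ p := by
      apply aux_mem_of_smul_le p hp hann
      intro m'
      have hcm' : c • m' ∈ K := Submodule.mem_colon.mp hcK m' trivial
      rw [hK, Submodule.mem_sup] at hcm'
      obtain ⟨y, hy, z, hz, hyz⟩ := hcm'
      rw [mem_span_singleton] at hy
      obtain ⟨r, rfl⟩ := hy
      have : (a * c) • m' = r • (a • m) + a • z := by
        rw [mul_smul, ← hyz, smul_add, smul_comm]
      rw [this]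
      exact Submodule.add_mem _ (Submodule.smul_mem _ _ ham) (Submodule.smul_mem _ _ hz)
    have hap : a ∈ p := (hp.mem_or_mem hac).resolve_right hcp
    rw [Submodule.mem_colon]
    intro m' _
    exact Submodule.smul_mem_smul hap trivial

end Aux

theorem radical_colon_isPrime {R M : Type*} [CommRing R] [AddCommGroup M]
    [Module R M] [Module.Finite R M] (hmul : IsMultiplicationModule R M)
    (N : Submodule R M) (hN : Is1AbsPrimary N) :
    ((N.colon ⊤).radical).IsPrime := by
  obtain ⟨hNtop, habs⟩ := hN
  set I : Ideal R := N.colon ⊤ with hI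
  have hIne : I ≠ ⊤ := by
    intro h
    apply hNtop
    rw [eq_top_iff]
    intro m _
    have : (1 : R) ∈ I := h ▸ trivial
    simpa using Submodule.mem_colon.mp this m trivial
  have hann : ∀ r : R, (∀ m : M, r • m = 0) → r ∈ I := by
    intro r hr
    rw [Submodule.mem_colon]
    intro m _
    rw [hr m]
    exact N.zero_mem
  constructor
  · rw [Ne, Ideal.radical_eq_top]; exact hIne
  intro a b hab
  by_cases ha : IsUnit a
  · right
    obtain ⟨u, rfl⟩ := ha
    have : (b : R) = (↑u⁻¹ : R) * (↑u * b) := by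
      rw [← mul_assoc]; simp
    rw [this]
    exact Ideal.mul_mem_left _ _ hab
  by_cases hb : IsUnit b
  · left
    obtain ⟨u, rfl⟩ := hb
    have : (a : R) = a * ↑u * ↑u⁻¹ := by simp [mul_assoc]
    rw [this]
    exact Ideal.mul_mem_right _ _ hab
  obtain ⟨n, hn⟩ := hab
  have hn0 : n ≠ 0 := by
    rintro rfl
    exact hIne (Ideal.eq_top_of_isUnit_mem _ (by simpa using hn) isUnit_one)
  have hn' : a ^ n * b ^ n ∈ I := by rwa [← mul_pow]
  by_cases hcase : a ^ n * a ^ n ∈ I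
  · left
    exact ⟨2 * n, by rwa [two_mul, pow_add]⟩
  right
  -- every b^n • m lies in Mrad N
  have hbm : ∀ m : M, b ^ n • m ∈ Mrad N := by
    intro m
    have hmem : (a ^ n * a ^ n) • (b ^ n • m) ∈ N := by
      have h1 : (a ^ n * b ^ n) • m ∈ N := Submodule.mem_colon.mp hn' m trivial
      have : (a ^ n * a ^ n) • (b ^ n • m) = a ^ n • ((a ^ n * b ^ n) • m) := by
        rw [smul_smul, smul_smul, mul_assoc]
      rw [this]
      exact N.smul_mem _ h1
    have hnu : ¬ IsUnit (a ^ n) := fun h => ha ((isUnit_pow_iff hn0).mp h)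
    exact (habs (a ^ n) (a ^ n) hnu hnu (b ^ n • m) hmem).resolve_left hcase
  -- conclude b ∈ radical
  by_contra hbr
  rw [Ideal.radical_eq_sInf, Submodule.mem_sInf] at hbr
  push_neg at hbr
  obtain ⟨p, ⟨hIp, hp⟩, hbp⟩ := hbr
  have hann' : ∀ r : R, (∀ m : M, r • m = 0) → r ∈ p := fun r hr => hIp (hann r hr)
  have hPprime : IsPrimeSubmodule (p • (⊤ : Submodule R M)) :=
    aux_smul_top_isPrime hmul p hp hann'
  have hNP : N ≤ p • (⊤ : Submodule R M) := by
    calc N = I • (⊤ : Submodule R M) := hmul N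
    _ ≤ p • (⊤ : Submodule R M) := Submodule.smul_mono_left hIp
  have hMrad : Mrad N ≤ p • (⊤ : Submodule R M) := sInf_le ⟨hPprime, hNP⟩
  have hbn : b ^ n ∈ p := by
    apply aux_mem_of_smul_le p hp hann'
    intro m
    exact hMrad (hbm m)
  exact hbp (hp.mem_of_pow_mem _ hbn)
end

section
/- If N is a 1-absorbing primary submodule of a finitely generated multiplication R-module M, then for every m ∈ M with m ∉ M-rad(N), the radical √(N :_R m) is a prime ideal of R containing √(N :_R M). -/
open Submodule

section Aux
variable {R M : Type*} [CommRing R] [AddCommGroup M] [Module R M]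

/-- Determinant trick: if `t • M ⊆ q M` for a prime `q` containing the annihilator,
then `t ∈ q`. -/
lemma det_trick [Module.Finite R M] {q : Ideal R} (hq : q.IsPrime)
    (hann : ∀ r : R, (∀ x : M, r • x = 0) → r ∈ q)
    {t : R} (ht : ∀ x : M, t • x ∈ q • (⊤ : Submodule R M)) : t ∈ q := by
  obtain ⟨p, hmonic, -, hcoeff, haeval⟩ :=
    LinearMap.exists_monic_and_coeff_mem_pow_and_aeval_eq_zero_of_range_le_smul R
      (t • (LinearMap.id : M →ₗ[R] M)) q (by rintro _ ⟨x, rfl⟩; exact ht x)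
  have hev : ∀ x : M, (p.eval t) • x = 0 := by
    have h1 : Polynomial.aeval (algebraMap R (Module.End R M) t) p
        = algebraMap R (Module.End R M) (p.eval t) := by
      rw [Polynomial.aeval_algebraMap_apply_eq_algebraMap_eval]
    rw [Module.algebraMap_end_eq_smul_id, haeval] at h1
    intro x
    have := congrArg (fun f : Module.End R M => f x) h1.symm
    simpa [Module.algebraMap_end_apply] using this
  have hpevq : p.eval t ∈ q := hann _ hev
  set n := p.natDegree with hn
  have hsum : p.eval t = (∑ i ∈ Finset.range n, p.coeff i * t ^ i) + t ^ n := by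
    rw [Polynomial.eval_eq_sum_range, Finset.sum_range_succ, hmonic.coeff_natDegree, one_mul]
  have htn : t ^ n ∈ q := by
    have hs : (∑ i ∈ Finset.range n, p.coeff i * t ^ i) ∈ q := by
      refine Ideal.sum_mem _ fun i hi => q.mul_mem_right _ ?_
      have hin : n - i ≠ 0 := Nat.sub_ne_zero_of_lt (Finset.mem_range.mp hi)
      exact Ideal.pow_le_self hin (hcoeff i)
    have : t ^ n = p.eval t - (∑ i ∈ Finset.range n, p.coeff i * t ^ i) := by
      rw [hsum]; ring
    rw [this]; exact q.sub_mem hpevq hs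
  exact hq.mem_of_pow_mem n htn


/-- For a prime `q` containing the annihilator of a f.g. multiplication module,
`q • ⊤` is a prime submodule. -/
lemma prime_smul_top [Module.Finite R M] (hmul : IsMultiplicationModule R M)
    {q : Ideal R} (hq : q.IsPrime)
    (hann : ∀ r : R, (∀ x : M, r • x = 0) → r ∈ q) :
    IsPrimeSubmodule (q • (⊤ : Submodule R M)) := by
  constructor
  · intro h
    obtain ⟨r, hr1, hr0⟩ :=
      Submodule.exists_sub_one_mem_and_smul_eq_zero_of_fg_of_le_smul q ⊤
        (Module.Finite.fg_top (R := R) (M := M)) (le_of_eq h.symm)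
    have hrq : r ∈ q := hann r fun x => hr0 x trivial
    have h1 : (1 : R) ∈ q := by
      have := q.sub_mem hrq hr1
      simpa using this
    exact hq.ne_top (Ideal.eq_top_of_isUnit_mem q h1 isUnit_one)
  · intro s x hsx
    by_cases hxq : x ∈ q • (⊤ : Submodule R M)
    · exact Or.inl hxq
    right
    have hs : s ∈ q := by
      by_contra hsq
      apply hxq
      have hx := hmul (Submodule.span R {x})
      have hIx : ((Submodule.span R {x}).colon ⊤) ≤ q := by
        intro c hc
        have h1 : ∀ y : M, (s * c) • y ∈ q • (⊤ : Submodule R M) := by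
          intro y
          have hcy : c • y ∈ Submodule.span R {x} := by
            rw [hx]; exact Submodule.smul_mem_smul hc trivial
          obtain ⟨r, hr⟩ := Submodule.mem_span_singleton.mp hcy
          have heq : (s * c) • y = r • (s • x) := by
            rw [mul_smul, ← hr, smul_comm]
          rw [heq]
          exact Submodule.smul_mem _ r hsx
        exact (hq.mem_or_mem (det_trick hq hann h1)).resolve_left hsq
      have hle : Submodule.span R {x} ≤ q • (⊤ : Submodule R M) := by
        rw [hx]; exact Submodule.smul_mono_left hIx
      exact hle (Submodule.mem_span_singleton_self x)
    rw [Submodule.mem_colon]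
    intro y _
    exact Submodule.smul_mem_smul hs trivial

/-- If `t • M ⊆ M`-rad `N`, then `t` lies in the radical of `(N :_R M)`. -/
lemma mem_radical_colon_of_smul_mem_mrad [Module.Finite R M]
    (hmul : IsMultiplicationModule R M) (N : Submodule R M)
    {t : R} (ht : ∀ x : M, t • x ∈ Mrad N) : t ∈ (N.colon ⊤).radical := by
  rw [Ideal.radical_eq_sInf]
  refine Submodule.mem_sInf.mpr ?_
  rintro q ⟨hq1, hq2⟩
  have hann : ∀ r : R, (∀ x : M, r • x = 0) → r ∈ q := by
    intro r hr
    refine hq1 ?_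
    rw [Submodule.mem_colon]
    intro y _
    rw [hr y]
    exact N.zero_mem
  have hP : IsPrimeSubmodule (q • (⊤ : Submodule R M)) := prime_smul_top hmul hq2 hann
  have hNle : N ≤ q • (⊤ : Submodule R M) :=
    le_trans (le_of_eq (hmul N)) (Submodule.smul_mono_left hq1)
  have hMrad : Mrad N ≤ q • (⊤ : Submodule R M) := sInf_le ⟨hP, hNle⟩
  exact det_trick hq2 hann fun x => hMrad (ht x)

end Aux


theorem radical_colon_elem_isPrime {R M : Type*} [CommRing R] [AddCommGroup M]
    [Module R M] [Module.Finite R M] (hmul : IsMultiplicationModule R M)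
    (N : Submodule R M) (hN : Is1AbsPrimary N) (m : M) (hm : m ∉ Mrad N) :
    ((N.colon (Submodule.span R {m})).radical).IsPrime ∧
      (N.colon ⊤).radical ≤ (N.colon (Submodule.span R {m})).radical := by
  classical
  set I := N.colon (Submodule.span R {m}) with hI
  set J := N.colon (⊤ : Submodule R M) with hJdef
  have hJI : J ≤ I := Submodule.colon_mono le_rfl le_top
  have hNmrad : N ≤ Mrad N := le_sInf fun P hP => hP.2
  have hItop : I ≠ ⊤ := by
    intro h
    apply hm
    apply hNmrad
    have h1 : (1 : R) ∈ I := h ▸ Submodule.mem_top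
    simpa using Submodule.mem_colon_span_singleton.mp h1
  refine ⟨⟨fun h => hItop (Ideal.radical_eq_top.mp h), ?_⟩, Ideal.radical_mono hJI⟩
  intro a b hab
  obtain ⟨n, hn⟩ := Ideal.mem_radical_iff.mp hab
  by_cases ha : IsUnit a
  · right
    obtain ⟨u, hu⟩ := ha.pow (n := n)
    refine Ideal.mem_radical_iff.mpr ⟨n, ?_⟩
    have hbn : b ^ n = ↑u⁻¹ * (a ^ n * b ^ n) := by
      rw [← mul_assoc, ← hu, Units.inv_mul, one_mul]
    rw [hbn]
    exact I.mul_mem_left _ (by rwa [← mul_pow])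
  by_cases hb : IsUnit b
  · left
    obtain ⟨u, hu⟩ := hb.pow (n := n)
    refine Ideal.mem_radical_iff.mpr ⟨n, ?_⟩
    have han : a ^ n = ↑u⁻¹ * (a ^ n * b ^ n) := by
      rw [← hu, mul_comm ((u⁻¹ : Rˣ) : R), mul_assoc, Units.mul_inv, mul_one]
    rw [han]
    exact I.mul_mem_left _ (by rwa [← mul_pow])
  -- both `a` and `b` are non-units
  set k := n + 1 with hk
  have hkI : (a * b) ^ k ∈ I := by
    rw [hk, pow_succ]
    exact I.mul_mem_right _ hn
  have hkm : (a ^ k * b ^ k) • m ∈ N := by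
    rw [← mul_pow]
    exact Submodule.mem_colon_span_singleton.mp hkI
  have hane : ¬ IsUnit (a ^ k) := fun h => ha ((isUnit_pow_iff (Nat.succ_ne_zero n)).mp h)
  have hbne : ¬ IsUnit (b ^ k) := fun h => hb ((isUnit_pow_iff (Nat.succ_ne_zero n)).mp h)
  have hJab : a ^ k * b ^ k ∈ J := by
    rcases hN.2 (a ^ k) (b ^ k) hane hbne m hkm with h | h
    · exact h
    · exact absurd h hm
  by_cases hbk : b ^ k * b ^ k ∈ J
  · right
    refine Ideal.mem_radical_iff.mpr ⟨k + k, ?_⟩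
    rw [pow_add]
    exact hJI hbk
  · left
    have hax : ∀ x : M, (a ^ k * a ^ k) • x ∈ Mrad N := by
      intro x
      have hJ2 : (a ^ k * b ^ k) * (a ^ k * b ^ k) ∈ J :=
        J.mul_mem_left _ hJab
      have h2 : (b ^ k * b ^ k) • ((a ^ k * a ^ k) • x) ∈ N := by
        have := Submodule.mem_colon.mp hJ2 x trivial
        rw [smul_smul]
        convert this using 2
        ring
      rcases hN.2 (b ^ k) (b ^ k) hbne hbne _ h2 with h | h
      · exact absurd h hbk
      · exact h
    have htJ : a ^ k * a ^ k ∈ J.radical :=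
      mem_radical_colon_of_smul_mem_mrad hmul N hax
    have htI : a ^ k * a ^ k ∈ I.radical := Ideal.radical_mono hJI htJ
    have : a ^ (k + k) ∈ I.radical := by rw [pow_add]; exact htI
    exact Ideal.mem_radical_of_pow_mem this
end

section
/- The submodule 6ℤ of the ℤ-module ℤ is not a 1-absorbing primary submodule, even though it is the intersection of the 1-absorbing primary submodules 2ℤ and 3ℤ. -/
open Submodule

lemma prime_span_int {p : ℤ} (hp : Prime p) :
    IsPrimeSubmodule (Ideal.span {p} : Ideal ℤ) := by
  constructor
  · rw [Ne, Ideal.span_singleton_eq_top]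
    exact hp.not_unit
  · intro a m h
    rw [smul_eq_mul, Ideal.mem_span_singleton] at h
    rcases (hp.dvd_mul.mp h) with h | h
    · right
      rw [Submodule.mem_colon]
      intro q _
      rw [smul_eq_mul, Ideal.mem_span_singleton]
      exact h.mul_right q
    · left; exact Ideal.mem_span_singleton.mpr h

lemma le_Mrad {R M : Type*} [CommRing R] [AddCommGroup M] [Module R M]
    (N : Submodule R M) : N ≤ Mrad N :=
  le_sInf fun _ hP => hP.2

lemma one_abs_prime_int {p : ℤ} (hp : Prime p) :
    Is1AbsPrimary (Ideal.span {p} : Ideal ℤ) := by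
  refine ⟨(prime_span_int hp).1, ?_⟩
  intro a b _ _ m h
  rw [smul_eq_mul, Ideal.mem_span_singleton] at h
  rcases hp.dvd_mul.mp h with h | h
  · left
    rw [Submodule.mem_colon]
    intro q _
    rw [smul_eq_mul, Ideal.mem_span_singleton]
    exact h.mul_right q
  · right
    exact le_Mrad _ (Ideal.mem_span_singleton.mpr h)

theorem six_not_one_abs_primary :
    ¬ Is1AbsPrimary (Ideal.span {(6 : ℤ)} : Ideal ℤ) ∧
      Is1AbsPrimary (Ideal.span {(2 : ℤ)} : Ideal ℤ) ∧
      Is1AbsPrimary (Ideal.span {(3 : ℤ)} : Ideal ℤ) ∧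
      (Ideal.span {(2 : ℤ)} : Ideal ℤ) ⊓ Ideal.span {(3 : ℤ)} = Ideal.span {(6 : ℤ)} := by
  refine ⟨?_, one_abs_prime_int Int.prime_two, one_abs_prime_int Int.prime_three, ?_⟩
  · rintro ⟨-, h⟩
    have h4 : ¬ IsUnit (2 : ℤ) := Int.prime_two.not_unit
    rcases h 2 2 h4 h4 3 (by
      rw [smul_eq_mul, Ideal.mem_span_singleton]; decide) with h | h
    · have := Submodule.mem_colon.mp h 1 trivial
      rw [smul_eq_mul, mul_one, Ideal.mem_span_singleton] at this
      omega
    · have hle : (Ideal.span {(6:ℤ)} : Ideal ℤ) ≤ Ideal.span {(2:ℤ)} := by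
        intro x hx
        rw [Ideal.mem_span_singleton] at *
        exact dvd_trans ⟨3, by ring⟩ hx
      have h2 : (3 : ℤ) ∈ (Ideal.span {(2:ℤ)} : Ideal ℤ) :=
        Submodule.mem_sInf.mp h _ ⟨prime_span_int Int.prime_two, hle⟩
      rw [Ideal.mem_span_singleton] at h2
      omega
  · ext x
    simp only [Submodule.mem_inf, Ideal.mem_span_singleton]
    constructor
    · rintro ⟨h2, h3⟩; omega
    · intro h; exact ⟨dvd_trans ⟨3, by ring⟩ h, dvd_trans ⟨2, by ring⟩ h⟩
end

section
/- Let M be a multiplication R-module and P a prime ideal of R. If N₁, ..., N_k are submodules of M each of which is 1-absorbing primary with √(N_i :_R M) = P, then their intersection ⋂ N_i is a 1-absorbing primary submodule with √((⋂N_i) :_R M) = P. -/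
open Submodule

theorem inf_P_one_abs_primary {R M : Type*} [CommRing R] [AddCommGroup M] [Module R M]
    (hmul : IsMultiplicationModule R M) (P : Ideal R) (hP : P.IsPrime)
    (k : ℕ) (hk : 0 < k) (N : Fin k → Submodule R M)
    (h : ∀ i, Is1AbsPrimary (N i) ∧ ((N i).colon ⊤).radical = P) :
    Is1AbsPrimary (⨅ i, N i) ∧ (((⨅ i, N i).colon ⊤)).radical = P := by
  classical
  have hmemcolon : ∀ (Q : Submodule R M) (a : R), a ∈ Q.colon ⊤ ↔ ∀ m : M, a • m ∈ Q := by
    intro Q a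
    constructor
    · intro ha m
      exact Submodule.mem_colon.mp ha m trivial
    · intro ha
      exact Submodule.mem_colon.mpr fun p _ => ha p
  -- colon of the infimum
  have hcolon : (⨅ i, N i).colon ⊤ = ⨅ i, (N i).colon ⊤ := by
    ext a
    simp only [Ideal.mem_iInf, hmemcolon, Submodule.mem_iInf]
    exact ⟨fun h' i m => h' m i, fun h' m i => h' i m⟩
  -- radical computation
  have hrad : ((⨅ i, N i).colon ⊤).radical = P := by
    rw [hcolon]
    apply le_antisymm
    · calc (⨅ i, (N i).colon ⊤).radical
          ≤ ((N ⟨0, hk⟩).colon ⊤).radical := Ideal.radical_mono (iInf_le _ _)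
        _ = P := (h ⟨0, hk⟩).2
    · intro x hx
      have hxi : ∀ i, x ∈ ((N i).colon ⊤).radical := fun i => (h i).2 ▸ hx
      choose n hn using fun i => (Ideal.mem_radical_iff.mp (hxi i))
      refine Ideal.mem_radical_iff.mpr ⟨Finset.univ.sup n, Submodule.mem_iInf _ |>.mpr ?_⟩
      intro i
      have hle : n i ≤ Finset.univ.sup n := Finset.le_sup (Finset.mem_univ i)
      have : x ^ Finset.univ.sup n = x ^ (n i) * x ^ (Finset.univ.sup n - n i) := by
        rw [← pow_add, Nat.add_sub_cancel' hle]
      rw [this]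
      exact Ideal.mul_mem_right _ _ (hn i)
  -- the infimum is proper
  have hne : (⨅ i, N i) ≠ ⊤ := by
    intro htop
    have : N ⟨0, hk⟩ = ⊤ := top_le_iff.mp (htop ▸ iInf_le N ⟨0, hk⟩)
    exact (h ⟨0, hk⟩).1.1 this
  refine ⟨⟨hne, ?_⟩, hrad⟩
  intro a b ha hb m hm
  by_cases hab : a * b ∈ (⨅ i, N i).colon ⊤
  · exact Or.inl hab
  · right
    -- there is some i₀ where a*b ∉ colon
    have : ¬ ∀ i, a * b ∈ (N i).colon ⊤ := by
      intro hall
      exact hab (hcolon ▸ (Submodule.mem_iInf _).mpr hall)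
    obtain ⟨i₀, hi₀⟩ := not_forall.mp this
    have hmrad : m ∈ Mrad (N i₀) := by
      rcases (h i₀).1.2 a b ha hb m ((Submodule.mem_iInf N).mp hm i₀) with h' | h'
      · exact absurd h' hi₀
      · exact h'
    -- show m ∈ Mrad (⨅ i, N i)
    refine Submodule.mem_sInf.mpr ?_
    rintro Q ⟨hQprime, hQge⟩
    -- Q.colon ⊤ is a prime ideal
    have hQcolon_prime : (Q.colon ⊤).IsPrime := by
      constructor
      · intro htop
        have h1 : (1 : R) ∈ Q.colon ⊤ := htop ▸ Submodule.mem_top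
        apply hQprime.1
        rw [eq_top_iff]
        intro x _
        simpa using (hmemcolon Q 1).mp h1 x
      · intro x y hxy
        by_cases hy : y ∈ Q.colon ⊤
        · exact Or.inr hy
        · left
          rw [hmemcolon]
          intro m'
          have : y • (x • m') ∈ Q := by
            rw [smul_smul, mul_comm y x]
            exact (hmemcolon Q (x * y)).mp hxy m'
          rcases hQprime.2 y (x • m') this with h' | h'
          · exact h'
          · exact absurd h' hy
    -- (⨅ i, N i).colon ⊤ ≤ Q.colon ⊤
    have hle : (⨅ i, N i).colon ⊤ ≤ Q.colon ⊤ := by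
      intro x hx
      rw [hmemcolon] at hx ⊢
      exact fun m' => hQge (hx m')
    -- P ≤ Q.colon ⊤
    have hPle : P ≤ Q.colon ⊤ := by
      calc P = ((⨅ i, N i).colon ⊤).radical := hrad.symm
        _ ≤ (Q.colon ⊤).radical := Ideal.radical_mono hle
        _ = Q.colon ⊤ := hQcolon_prime.radical
    -- N i₀ ≤ Q
    have hNle : N i₀ ≤ Q := by
      have h1 : (N i₀).colon ⊤ ≤ Q.colon ⊤ :=
        le_trans (Ideal.le_radical) ((h i₀).2 ▸ hPle)
      calc N i₀ = ((N i₀).colon ⊤) • (⊤ : Submodule R M) := hmul (N i₀)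
        _ ≤ (Q.colon ⊤) • (⊤ : Submodule R M) := Submodule.smul_mono_left h1
        _ ≤ Q := Submodule.smul_le.mpr fun r hr m' _ => (hmemcolon Q r).mp hr m'
    exact Submodule.mem_sInf.mp hmrad Q ⟨hQprime, hNle⟩
end

section
/- Let f: M₁ → M₂ be a surjective R-module homomorphism. If N₁ is a 1-absorbing primary submodule of M₁ containing ker(f), then f(N₁) is a 1-absorbing primary submodule of M₂. -/
open Submodule

theorem map_one_abs_primary {R M₁ M₂ : Type*} [CommRing R] [AddCommGroup M₁] [Module R M₁]
    [AddCommGroup M₂] [Module R M₂] (f : M₁ →ₗ[R] M₂) (hf : Function.Surjective f)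
    (N₁ : Submodule R M₁) (hker : LinearMap.ker f ≤ N₁) (hN₁ : Is1AbsPrimary N₁) :
    Is1AbsPrimary (N₁.map f) := by
  obtain ⟨hne, habs⟩ := hN₁
  have hpull : ∀ x : M₁, f x ∈ N₁.map f → x ∈ N₁ := by
    intro x hx
    obtain ⟨n, hn, hfn⟩ := hx
    have hk : x - n ∈ LinearMap.ker f := by
      simp [LinearMap.mem_ker, map_sub, hfn]
    have := N₁.add_mem (hker hk) hn
    simpa using this
  constructor
  · intro h
    apply hne
    rw [eq_top_iff]
    intro m _
    exact hpull m (h ▸ Submodule.mem_top)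
  · intro a b ha hb m₂ hab
    obtain ⟨m₁, rfl⟩ := hf m₂
    have h1 : (a * b) • m₁ ∈ N₁ := by
      apply hpull
      rw [map_smul]; exact hab
    rcases habs a b ha hb m₁ h1 with h | h
    · left
      rw [Submodule.mem_colon]
      intro p _
      obtain ⟨q, rfl⟩ := hf p
      rw [← map_smul]
      exact Submodule.mem_map_of_mem (Submodule.mem_colon.mp h q trivial)
    · right
      rw [Mrad, Submodule.mem_sInf]
      intro P hP
      obtain ⟨⟨hPne, hPprime⟩, hNP⟩ := hP
      have hcomap : IsPrimeSubmodule (P.comap f) ∧ N₁ ≤ P.comap f := by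
        refine ⟨⟨?_, ?_⟩, ?_⟩
        · intro htop
          apply hPne
          rw [← Submodule.map_comap_eq_of_surjective hf P, htop, Submodule.map_top,
            LinearMap.range_eq_top.mpr hf]
        · intro c m hm
          rcases hPprime c (f m) (by rw [← map_smul]; exact hm) with h' | h'
          · exact Or.inl h'
          · right
            rw [Submodule.mem_colon] at h' ⊢
            intro p _
            exact Submodule.mem_comap.mpr (by rw [map_smul]; exact h' (f p) trivial)
        · intro n hn
          exact Submodule.mem_comap.mpr (hNP (Submodule.mem_map_of_mem hn))
      have := (Submodule.mem_sInf.mp (by rw [Mrad] at h; exact h)) (P.comap f) hcomap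
      exact this
end

section
/- Let N₂ ⊆ N₁ be submodules of an R-module M. Then N₁ is a 1-absorbing primary submodule of M if and only if N₁/N₂ is a 1-absorbing primary submodule of M/N₂. -/
open Submodule

section Aux

variable {R M : Type*} [CommRing R] [AddCommGroup M] [Module R M]

lemma comap_map_mkQ (N₂ P : Submodule R M) (h : N₂ ≤ P) :
    (P.map N₂.mkQ).comap N₂.mkQ = P := by
  rw [Submodule.comap_map_eq, Submodule.ker_mkQ, sup_eq_left.mpr h]

lemma mem_map_mkQ_iff (N₂ P : Submodule R M) (h : N₂ ≤ P) (x : M) :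
    N₂.mkQ x ∈ P.map N₂.mkQ ↔ x ∈ P := by
  conv_rhs => rw [← comap_map_mkQ N₂ P h]
  rfl

lemma colon_map_mkQ (N₂ P : Submodule R M) (h : N₂ ≤ P) (a : R) :
    a ∈ (P.map N₂.mkQ).colon ⊤ ↔ a ∈ P.colon ⊤ := by
  simp only [Submodule.mem_colon]
  constructor
  · intro H x _
    have := H (N₂.mkQ x) trivial
    rw [← map_smul, mem_map_mkQ_iff N₂ P h] at this
    exact this
  · intro H y _
    obtain ⟨x, rfl⟩ := N₂.mkQ_surjective y
    rw [← map_smul, mem_map_mkQ_iff N₂ P h]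
    exact H x trivial

lemma map_mkQ_ne_top (N₂ P : Submodule R M) (h : N₂ ≤ P) :
    P.map N₂.mkQ ≠ ⊤ ↔ P ≠ ⊤ := by
  constructor
  · intro H hP; exact H (by rw [hP, Submodule.map_top, Submodule.range_mkQ])
  · intro H hP
    apply H
    rw [← comap_map_mkQ N₂ P h, hP, Submodule.comap_top]

lemma prime_map_mkQ (N₂ P : Submodule R M) (h : N₂ ≤ P) (hP : IsPrimeSubmodule P) :
    IsPrimeSubmodule (P.map N₂.mkQ) := by
  refine ⟨(map_mkQ_ne_top N₂ P h).mpr hP.1, ?_⟩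
  intro a y hy
  obtain ⟨x, rfl⟩ := N₂.mkQ_surjective y
  rw [← map_smul, mem_map_mkQ_iff N₂ P h] at hy
  rcases hP.2 a x hy with h1 | h1
  · exact Or.inl ((mem_map_mkQ_iff N₂ P h x).mpr h1)
  · exact Or.inr ((colon_map_mkQ N₂ P h a).mpr h1)

lemma prime_comap_mkQ (N₂ : Submodule R M) (Q : Submodule R (M ⧸ N₂))
    (hQ : IsPrimeSubmodule Q) : IsPrimeSubmodule (Q.comap N₂.mkQ) := by
  constructor
  · intro H
    apply hQ.1
    rw [eq_top_iff]
    intro y _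
    obtain ⟨x, rfl⟩ := N₂.mkQ_surjective y
    have : x ∈ Q.comap N₂.mkQ := by rw [H]; trivial
    exact this
  · intro a x hx
    have : a • N₂.mkQ x ∈ Q := by rwa [← map_smul]
    rcases hQ.2 a _ this with h1 | h1
    · exact Or.inl h1
    · refine Or.inr ?_
      rw [Submodule.mem_colon] at h1 ⊢
      intro p _
      have := h1 (N₂.mkQ p) trivial
      rwa [← map_smul] at this
      
lemma mrad_map_mkQ (N₂ N₁ : Submodule R M) (h : N₂ ≤ N₁) (x : M) :
    N₂.mkQ x ∈ Mrad (N₁.map N₂.mkQ) ↔ x ∈ Mrad N₁ := by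
  simp only [Mrad, Submodule.mem_sInf, Set.mem_setOf_eq]
  constructor
  · intro H P ⟨hP, hNP⟩
    have hN₂P : N₂ ≤ P := h.trans hNP
    have := H (P.map N₂.mkQ) ⟨prime_map_mkQ N₂ P hN₂P hP, Submodule.map_mono hNP⟩
    exact (mem_map_mkQ_iff N₂ P hN₂P x).mp this
  · intro H Q ⟨hQ, hNQ⟩
    have : x ∈ Q.comap N₂.mkQ := by
      apply H
      refine ⟨prime_comap_mkQ N₂ Q hQ, ?_⟩
      intro y hy
      exact hNQ (Submodule.mem_map_of_mem hy)
    exact this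

end Aux

theorem one_abs_primary_iff_quotient {R M : Type*} [CommRing R] [AddCommGroup M] [Module R M]
    (N₁ N₂ : Submodule R M) (h : N₂ ≤ N₁) :
    Is1AbsPrimary N₁ ↔ Is1AbsPrimary (N₁.map N₂.mkQ) := by
  constructor
  · rintro ⟨hne, H⟩
    refine ⟨(map_mkQ_ne_top N₂ N₁ h).mpr hne, ?_⟩
    intro a b ha hb y hy
    obtain ⟨x, rfl⟩ := N₂.mkQ_surjective y
    rw [← map_smul, mem_map_mkQ_iff N₂ N₁ h] at hy
    rcases H a b ha hb x hy with h1 | h1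
    · exact Or.inl ((colon_map_mkQ N₂ N₁ h _).mpr h1)
    · exact Or.inr ((mrad_map_mkQ N₂ N₁ h x).mpr h1)
  · rintro ⟨hne, H⟩
    refine ⟨(map_mkQ_ne_top N₂ N₁ h).mp hne, ?_⟩
    intro a b ha hb x hx
    have : (a * b) • N₂.mkQ x ∈ N₁.map N₂.mkQ := by
      rw [← map_smul]; exact Submodule.mem_map_of_mem hx
    rcases H a b ha hb _ this with h1 | h1
    · exact Or.inl ((colon_map_mkQ N₂ N₁ h _).mp h1)
    · exact Or.inr ((mrad_map_mkQ N₂ N₁ h x).mp h1)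
end

section
/- Let S be a multiplicatively closed subset of a commutative ring R and M an R-module. If N is a 1-absorbing primary submodule of M and S⁻¹N ≠ S⁻¹M, then S⁻¹N is a 1-absorbing primary submodule of the S⁻¹R-module S⁻¹M. -/
open Submodule

section Aux

variable {R M : Type*} [CommRing R] [AddCommGroup M] [Module R M] (S : Submonoid R)

/-- If `a` is a unit in `R`, then `Localization.mk a s` is a unit. -/
lemma aux_isUnit_mk {a : R} (s : S) (ha : IsUnit a) : IsUnit (Localization.mk a s) := by
  obtain ⟨v, hv⟩ := ha.exists_right_inv
  refine IsUnit.of_mul_eq_one (a := Localization.mk a s) (Localization.mk ((s : R) * v) 1) ?_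
  rw [Localization.mk_mul]
  have : a * ((s : R) * v) = (s : R) := by
    rw [mul_comm (s : R) v, ← mul_assoc, hv, one_mul]
  rw [this, mul_one]
  exact Localization.mk_self s

lemma aux_colon_mem (N : Submodule R M) {a : R} (ha : a ∈ N.colon ⊤) (s : S) :
    Localization.mk a s ∈ (N.localized S).colon ⊤ := by
  rw [Submodule.mem_colon]
  intro p _
  induction p using LocalizedModule.induction_on with
  | h m u =>
    rw [LocalizedModule.mk_smul_mk]
    exact ⟨a • m, Submodule.mem_colon.mp ha m trivial, s * u,
      (IsLocalizedModule.mk_eq_mk' _ _).symm⟩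

lemma aux_mrad_mem (N : Submodule R M) {x : M} (hx : x ∈ Mrad N) (s : S) :
    LocalizedModule.mk x s ∈ Mrad (N.localized S) := by
  rw [Mrad, Submodule.mem_sInf]
  rintro P' ⟨hP'prime, hP'le⟩
  set f := LocalizedModule.mkLinearMap S M with hf
  set P : Submodule R M := (P'.restrictScalars R).comap f with hP
  have hmem : ∀ m : M, m ∈ P ↔ LocalizedModule.mk m 1 ∈ P' := by
    intro m
    rfl
  have hPprime : IsPrimeSubmodule P := by
    constructor
    · intro htop
      apply hP'prime.1
      rw [eq_top_iff]
      intro p _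
      induction p using LocalizedModule.induction_on with
      | h m u =>
        have h1 : LocalizedModule.mk m 1 ∈ P' := (hmem m).mp (htop ▸ Submodule.mem_top)
        have : Localization.mk (1 : R) u • LocalizedModule.mk m (1 : S) = LocalizedModule.mk m u := by
          rw [LocalizedModule.mk_smul_mk, one_smul, mul_one]
        exact this ▸ P'.smul_mem _ h1
    · intro a m ham
      have h1 : LocalizedModule.mk (a • m) 1 ∈ P' := (hmem _).mp ham
      have h2 : LocalizedModule.mk (a • m) 1
          = Localization.mk a (1 : S) • LocalizedModule.mk m (1 : S) := by
        rw [LocalizedModule.mk_smul_mk, one_mul]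
      rw [h2] at h1
      rcases hP'prime.2 _ _ h1 with h | h
      · exact Or.inl ((hmem m).mpr h)
      · right
        rw [Submodule.mem_colon]
        intro p _
        have : Localization.mk a 1 • LocalizedModule.mk p 1 ∈ P' :=
          Submodule.mem_colon.mp h _ trivial
        rw [LocalizedModule.mk_smul_mk, one_mul] at this
        exact (hmem _).mpr this
  have hNP : N ≤ P := by
    intro n hn
    exact (hmem n).mpr (hP'le ⟨n, hn, 1, by
      rw [← IsLocalizedModule.mk_eq_mk']⟩)
  have hxP : x ∈ P := by
    rw [Mrad, Submodule.mem_sInf] at hx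
    exact hx P ⟨hPprime, hNP⟩
  have h1 : LocalizedModule.mk x 1 ∈ P' := (hmem x).mp hxP
  have : Localization.mk (1 : R) s • LocalizedModule.mk x 1 = LocalizedModule.mk x s := by
    rw [LocalizedModule.mk_smul_mk, one_smul, mul_one]
  exact this ▸ P'.smul_mem _ h1

end Aux

theorem localized_one_abs_primary {R M : Type*} [CommRing R] [AddCommGroup M] [Module R M]
    (S : Submonoid R) (N : Submodule R M) (hN : Is1AbsPrimary N)
    (hproper : N.localized S ≠ ⊤) :
    Is1AbsPrimary (N.localized S) := by
  refine ⟨hproper, ?_⟩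
  intro a b ha hb m habm
  induction a using Localization.induction_on with
  | H pa =>
  obtain ⟨ra, sa⟩ := pa
  induction b using Localization.induction_on with
  | H pb =>
  obtain ⟨rb, sb⟩ := pb
  induction m using LocalizedModule.induction_on with
  | h m u =>
  simp only at ha hb habm ⊢
  have hra : ¬ IsUnit ra := fun h => ha (aux_isUnit_mk S sa h)
  have hrb : ¬ IsUnit rb := fun h => hb (aux_isUnit_mk S sb h)
  rw [Localization.mk_mul, LocalizedModule.mk_smul_mk] at habm
  obtain ⟨n, hn, w, hw⟩ := habm
  rw [← IsLocalizedModule.mk_eq_mk', LocalizedModule.mk_eq] at hw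
  obtain ⟨c, hc⟩ := hw
  -- hc : c • (sa * sb * u) • n = c • w • ((ra * rb) • m)
  have hmemN : (ra * rb) • (((c : R) * (w : R)) • m) ∈ N := by
    have hl : c • (sa * sb * u) • n ∈ N := by
      rw [Submonoid.smul_def, Submonoid.smul_def]
      exact N.smul_mem _ (N.smul_mem _ hn)
    rw [hc, Submonoid.smul_def, Submonoid.smul_def, smul_smul, smul_smul] at hl
    rw [smul_smul]
    rwa [show (ra * rb) * ((c : R) * (w : R)) = (c : R) * (w : R) * (ra * rb) by ring]
  rcases hN.2 ra rb hra hrb _ hmemN with h | h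
  · left
    rw [Localization.mk_mul]
    exact aux_colon_mem S N h (sa * sb)
  · right
    set cw : S := ⟨(c : R) * (w : R), S.mul_mem c.2 w.2⟩ with hcw
    have key := aux_mrad_mem S N h (cw * u)
    have heq := LocalizedModule.mk_cancel_common_left cw u m
    rw [Submonoid.smul_def] at heq
    rwa [heq] at key
end

section
/- Let M be an R-module and H = I(+)N a homogeneous ideal of the idealization R(+)M (so I is an ideal of R, N a submodule of M with IM ⊆ N). If I(+)N is a 1-absorbing primary ideal of R(+)M, then I is a 1-absorbing primary ideal of R. -/
open Submodule

theorem idealization_one_abs_primary {R M : Type*} [CommRing R] [AddCommGroup M] [Module R M]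
    [Module Rᵐᵒᵖ M] [IsCentralScalar R M]
    (I : Ideal R) (N : Submodule R M) (J : Ideal (TrivSqZeroExt R M))
    (hJ : ∀ x : TrivSqZeroExt R M, x ∈ J ↔ x.fst ∈ I ∧ x.snd ∈ N)
    (hIN : ∀ (a : R) (m : M), a ∈ I → a • m ∈ N)
    (h : Is1AbsPrimaryIdeal J) :
    Is1AbsPrimaryIdeal I := by
  constructor
  · intro hI
    exact h.1 (Ideal.eq_top_iff_one _ |>.mpr ((hJ 1).mpr ⟨hI ▸ Submodule.mem_top, N.zero_mem⟩))
  · intro a b c ha hb hc habc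
    have ha' : ¬ IsUnit (TrivSqZeroExt.inl a : TrivSqZeroExt R M) := by
      rwa [TrivSqZeroExt.isUnit_inl_iff]
    have hb' : ¬ IsUnit (TrivSqZeroExt.inl b : TrivSqZeroExt R M) := by
      rwa [TrivSqZeroExt.isUnit_inl_iff]
    have hc' : ¬ IsUnit (TrivSqZeroExt.inl c : TrivSqZeroExt R M) := by
      rwa [TrivSqZeroExt.isUnit_inl_iff]
    have hmem : TrivSqZeroExt.inl a * TrivSqZeroExt.inl b * TrivSqZeroExt.inl c ∈ J := by
      rw [← TrivSqZeroExt.inl_mul, ← TrivSqZeroExt.inl_mul, hJ]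
      exact ⟨habc, by simp⟩
    rcases h.2 _ _ _ ha' hb' hc' hmem with h1 | h2
    · left
      rw [← TrivSqZeroExt.inl_mul, hJ] at h1
      exact h1.1
    · right
      obtain ⟨n, hn⟩ := h2
      exact ⟨n, by
        rw [hJ] at hn
        simpa [TrivSqZeroExt.fst_pow] using hn.1⟩
end
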